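/- Let (V,f) be a nondegenerate 4-dimensional symplectic space with symplectic basis e₁,e₂,e₃,e₄ (f(e₁,e₃)=f(e₂,e₄)=1, other basis pairings zero), W the span of e₁,e₂,e₃, and 𝔰 the subalgebra of 𝔰_f generated by {w⊗f_w : w ∈ W}. Then e₂ ⊗ f_{e₂} is a nonzero central element of 𝔰. -/

import Mathlib

attribute [local instance 100] LieRing.ofAssociativeRing

/-- The "pure tensor" `v ⊗ f_v`, viewed as the endomorphism `u ↦ f(v,u) • v` of `V`. -/
noncomputable def rk1 {F V : Type*} [Field F] [AddCommGroup V] [Module F V]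
    (f : V →ₗ[F] V →ₗ[F] F) (v : V) : Module.End F V :=
  (f v).smulRight v

/-- Let `(V,f)` be a 4-dimensional symplectic space with symplectic basis
`e₁, e₂, e₃, e₄` (`f(e₁,e₃) = f(e₂,e₄) = 1`, other basis pairings zero), `W` the span of
`e₁, e₂, e₃`, and `𝔰` the subalgebra of `𝔰_f` generated by the tensors `w ⊗ f_w`, `w ∈ W`.
Then `e₂ ⊗ f_{e₂}` is a nonzero central element of `𝔰`. -/
theorem stmt14 {F V : Type*} [Field F] [AddCommGroup V] [Module F V]
    (h2 : (2 : F) ≠ 0)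
    (e : Module.Basis (Fin 4) F V)
    (f : V →ₗ[F] V →ₗ[F] F) (halt : ∀ v : V, f v v = 0)
    (h13 : f (e 0) (e 2) = 1) (h24 : f (e 1) (e 3) = 1)
    (h12 : f (e 0) (e 1) = 0) (h14 : f (e 0) (e 3) = 0)
    (h23 : f (e 1) (e 2) = 0) (h34 : f (e 2) (e 3) = 0) :
    rk1 f (e 1) ≠ 0 ∧
    rk1 f (e 1) ∈ LieSubalgebra.lieSpan F (Module.End F V)
        (rk1 f '' (Submodule.span F {e 0, e 1, e 2} : Submodule F V)) ∧
    ∀ s ∈ LieSubalgebra.lieSpan F (Module.End F V)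
        (rk1 f '' (Submodule.span F {e 0, e 1, e 2} : Submodule F V)),
      ⁅rk1 f (e 1), s⁆ = 0 := by
  have hskew : ∀ v w : V, f v w = - f w v := by
    intro v w
    have h := halt (v + w)
    simp only [map_add, LinearMap.add_apply, halt] at h
    linear_combination h
  have hW1 : ∀ w ∈ (Submodule.span F {e 0, e 1, e 2} : Submodule F V), f w (e 1) = 0 := by
    intro w hw
    induction hw using Submodule.span_induction with
    | mem x hx =>
      simp only [Set.mem_insert_iff, Set.mem_singleton_iff] at hx
      rcases hx with rfl | rfl | rfl
      · exact h12
      · exact halt _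
      · rw [hskew, h23, neg_zero]
    | zero => simp
    | add x y _ _ hx hy => simp [map_add, hx, hy]
    | smul c x _ hx => simp [hx]
  have h1W : ∀ w ∈ (Submodule.span F {e 0, e 1, e 2} : Submodule F V), f (e 1) w = 0 := by
    intro w hw
    rw [hskew, hW1 w hw, neg_zero]
  have hbrk : ∀ w ∈ (Submodule.span F {e 0, e 1, e 2} : Submodule F V),
      ⁅rk1 f (e 1), rk1 f w⁆ = 0 := by
    intro w hw
    ext u
    simp [rk1, Ring.lie_def, Module.End.mul_apply, hW1 w hw, h1W w hw, smul_smul, mul_comm]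
  let K : LieSubalgebra F (Module.End F V) :=
    { carrier := {x | ⁅rk1 f (e 1), x⁆ = 0}
      add_mem' := fun {x y} hx hy => by
        simp only [Set.mem_setOf_eq, lie_add] at *
        rw [hx, hy, add_zero]
      zero_mem' := by simp
      smul_mem' := fun c x hx => by
        simp only [Set.mem_setOf_eq, lie_smul] at *
        rw [hx, smul_zero]
      lie_mem' := fun {x y} hx hy => by
        simp only [Set.mem_setOf_eq] at *
        rw [leibniz_lie, hx, hy, zero_lie, lie_zero, add_zero] }
  have hle : LieSubalgebra.lieSpan F (Module.End F V)
      (rk1 f '' (Submodule.span F {e 0, e 1, e 2} : Submodule F V)) ≤ K := by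
    rw [LieSubalgebra.lieSpan_le]
    rintro _ ⟨w, hw, rfl⟩
    exact hbrk w hw
  refine ⟨?_, ?_, fun s hs => hle hs⟩
  · intro h
    have h3 : rk1 f (e 1) (e 3) = 0 := by rw [h]; rfl
    simp only [rk1, LinearMap.smulRight_apply, h24, one_smul] at h3
    exact e.ne_zero 1 h3
  · exact LieSubalgebra.subset_lieSpan ⟨e 1, Submodule.subset_span (by simp), rfl⟩
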